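/- For every integer n ≥ 1 and every x ∈ ℂ that is not an integer, one has ∏_{m=1}^n (x+2m−1)/(x−2m) = g(x)·(−1)^n·Γ((x+1)/2 + n)/Γ(1 − x/2 + n), where g(x) := √π·2^{x−1}/(sin(πx/2)·Γ(x)). -/

import Mathlib

open Complex Finset Real

/-- `g(x) := √π · 2^(x-1) / (sin(πx/2) · Γ(x))`. -/
noncomputable def gFun (x : ℂ) : ℂ :=
  (Real.sqrt Real.pi : ℂ) * (2 : ℂ) ^ (x - 1) /
    (Complex.sin (Real.pi * x / 2) * Complex.Gamma x)

lemma sin_half_ne_zero (x : ℂ) (hx : ∀ k : ℤ, x ≠ (k : ℂ)) :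
    Complex.sin (Real.pi * x / 2) ≠ 0 := by
  intro h
  rw [Complex.sin_eq_zero_iff] at h
  obtain ⟨k, hk⟩ := h
  apply hx (2 * k)
  have hπ : (Real.pi : ℂ) ≠ 0 := Complex.ofReal_ne_zero.mpr Real.pi_ne_zero
  have h2 : (Real.pi : ℂ) * x = (Real.pi : ℂ) * (2 * k) := by linear_combination 2 * hk
  push_cast
  exact mul_left_cancel₀ hπ h2

lemma gFun_base (x : ℂ) (hx : ∀ k : ℤ, x ≠ (k : ℂ)) :
    gFun x * Complex.Gamma ((x + 1) / 2) = Complex.Gamma (1 - x / 2) := by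
  have hs : Complex.sin (Real.pi * x / 2) ≠ 0 := sin_half_ne_zero x hx
  have hG : Complex.Gamma x ≠ 0 := by
    refine Complex.Gamma_ne_zero fun m h => hx (-(m : ℤ)) ?_
    push_cast; linear_combination h
  have hP : Complex.Gamma (x / 2) ≠ 0 := by
    refine Complex.Gamma_ne_zero fun m h => hx (-(2 * m : ℤ)) ?_
    push_cast; linear_combination 2 * h
  have hd := Complex.Gamma_mul_Gamma_add_half (x / 2)
  rw [show 2 * (x / 2) = x from by ring] at hd
  have hr := Complex.Gamma_mul_Gamma_one_sub (x / 2)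
  have hrw : (Real.pi : ℂ) * (x / 2) = Real.pi * x / 2 := by ring
  rw [hrw, eq_div_iff hs] at hr
  have h2 : (2 : ℂ) ^ (x - 1) * (2 : ℂ) ^ (1 - x) = 1 := by
    rw [← Complex.cpow_add _ _ two_ne_zero,
      show x - 1 + (1 - x) = 0 from by ring, Complex.cpow_zero]
  have hπ : ((Real.sqrt Real.pi : ℝ) : ℂ) * ((Real.sqrt Real.pi : ℝ) : ℂ) = (Real.pi : ℂ) := by
    rw [← Complex.ofReal_mul, Real.mul_self_sqrt Real.pi_nonneg]
  have hhalf : (x + 1) / 2 = x / 2 + 1 / 2 := by ring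
  have key : (Real.sqrt Real.pi : ℂ) * (2 : ℂ) ^ (x - 1) * Complex.Gamma (x / 2 + 1 / 2)
      * Complex.Gamma (x / 2)
      = Complex.Gamma (1 - x / 2) * Complex.sin (Real.pi * x / 2) * Complex.Gamma x
      * Complex.Gamma (x / 2) := by
    linear_combination ((Real.sqrt Real.pi : ℂ) * (2 : ℂ) ^ (x - 1)) * hd
      - Complex.Gamma x * hr
      + ((2 : ℂ) ^ (x - 1) * (2 : ℂ) ^ (1 - x) * Complex.Gamma x) * hπ
      + ((Real.pi : ℂ) * Complex.Gamma x) * h2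
  have key2 := mul_right_cancel₀ hP key
  rw [gFun, hhalf, div_mul_eq_mul_div, key2]
  rw [mul_assoc, mul_div_assoc, div_self (mul_ne_zero hs hG), mul_one]

lemma stmt_aux (x : ℂ) (hx : ∀ k : ℤ, x ≠ (k : ℂ)) (n : ℕ) :
    ∏ m ∈ Finset.Icc 1 n, (x + 2 * (m : ℂ) - 1) / (x - 2 * (m : ℂ)) =
      gFun x * (-1) ^ n * Complex.Gamma ((x + 1) / 2 + n) /
        Complex.Gamma (1 - x / 2 + n) := by
  induction n with
  | zero =>
      have hR : Complex.Gamma (1 - x / 2) ≠ 0 := by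
        refine Complex.Gamma_ne_zero fun m h => hx (2 * (1 + m : ℤ)) ?_
        push_cast; linear_combination -2 * h
      simp only [Finset.Icc_self, Nat.cast_zero, add_zero, pow_zero, mul_one]
      rw [Finset.Icc_eq_empty (by norm_num), Finset.prod_empty]
      rw [eq_div_iff hR, one_mul, gFun_base x hx]
  | succ n ih =>
      have hA : Complex.Gamma ((x + 1) / 2 + n) ≠ 0 := by
        refine Complex.Gamma_ne_zero fun m h => hx (-(2 * m + 2 * n + 1 : ℤ)) ?_
        push_cast; linear_combination 2 * h
      have hB : Complex.Gamma (1 - x / 2 + n) ≠ 0 := by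
        refine Complex.Gamma_ne_zero fun m h => hx (2 * (1 + n + m : ℤ)) ?_
        push_cast; linear_combination -2 * h
      have hA0 : (x + 1) / 2 + (n : ℂ) ≠ 0 := fun h => by
        refine hx (-(2 * n + 1 : ℤ)) ?_
        push_cast; linear_combination 2 * h
      have hB0 : 1 - x / 2 + (n : ℂ) ≠ 0 := fun h => by
        refine hx (2 * (n + 1 : ℤ)) ?_
        push_cast; linear_combination -2 * h
      have hden : x - 2 * ((n : ℂ) + 1) ≠ 0 := fun h => by
        refine hx (2 * (n + 1 : ℤ)) ?_
        push_cast; linear_combination h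
      rw [Finset.prod_Icc_succ_top (Nat.succ_le_succ (Nat.zero_le n)), ih]
      have e1 : ((x + 1) / 2 + (n + 1 : ℕ) : ℂ) = ((x + 1) / 2 + n) + 1 := by
        push_cast; ring
      have e2 : (1 - x / 2 + (n + 1 : ℕ) : ℂ) = (1 - x / 2 + n) + 1 := by
        push_cast; ring
      rw [e1, e2, Complex.Gamma_add_one _ hA0, Complex.Gamma_add_one _ hB0]
      rw [show ((n + 1 : ℕ) : ℂ) = (n : ℂ) + 1 from by push_cast; ring]
      rw [pow_succ, div_mul_div_comm]
      rw [div_eq_div_iff (mul_ne_zero hB hden) (mul_ne_zero hB0 hB)]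
      ring

/-- For every integer `n ≥ 1` and every non-integer `x ∈ ℂ`,
`∏_{m=1}^n (x+2m-1)/(x-2m) = g(x)·(-1)^n·Γ((x+1)/2 + n)/Γ(1 - x/2 + n)`. -/
theorem stmt_1 (n : ℕ) (hn : 1 ≤ n) (x : ℂ) (hx : ∀ k : ℤ, x ≠ (k : ℂ)) :
    ∏ m ∈ Finset.Icc 1 n, (x + 2 * (m : ℂ) - 1) / (x - 2 * (m : ℂ)) =
      gFun x * (-1) ^ n * Complex.Gamma ((x + 1) / 2 + n) /
        Complex.Gamma (1 - x / 2 + n) := by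
  exact stmt_aux x hx n
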